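/- arXiv:2104.14732 — 3 statements merged into one kernel-verified Lean document; each statement's English description precedes it below -/
import Mathlib

section
/- Let k be a finite field of odd characteristic and let x ∈ PGL_2(k) be an element with x ≠ 1 and x² = 1. Then the following are equivalent: (i) there exists G ∈ GL_2(k) with G² = I and Proj(G) = x; (ii) for some (equivalently, for every) g ∈ GL_2(k) with Proj(g) = x, the element −det(g) is a square in k×. -/
open Matrix

/-- The homomorphism `λ ↦ λ·I` from units of `R` to `GL 2 R`. -/
def scalarHom (R : Type*) [CommRing R] : Rˣ →* GL (Fin 2) R :=
  Units.map (Matrix.scalar (Fin 2) : R →+* Matrix (Fin 2) (Fin 2) R).toMonoidHom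

/-- The central subgroup of scalar matrices `λ·I`, `λ` a unit. -/
def scalarSubgroup (R : Type*) [CommRing R] : Subgroup (GL (Fin 2) R) :=
  (scalarHom R).range

theorem scalarSubgroup_le_center (R : Type*) [CommRing R] :
    scalarSubgroup R ≤ Subgroup.center (GL (Fin 2) R) := by
  rintro _ ⟨u, rfl⟩
  rw [Subgroup.mem_center_iff]
  intro g
  refine Units.ext ?_
  have h := (Matrix.scalar_commute (u : R) (fun r' => mul_comm _ _)
    (g : Matrix (Fin 2) (Fin 2) R)).symm.eq
  simpa [scalarHom] using h

instance scalarSubgroup_normal (R : Type*) [CommRing R] : (scalarSubgroup R).Normal := by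
  constructor
  intro n hn g
  have h := (Subgroup.mem_center_iff.mp (scalarSubgroup_le_center R hn)) g
  rw [h, mul_assoc, mul_inv_cancel, mul_one]
  exact hn

/-- `PGL₂(R)`: the quotient of `GL₂(R)` by the subgroup of scalar matrices. -/
def PGL2 (R : Type*) [CommRing R] : Type _ :=
  GL (Fin 2) R ⧸ scalarSubgroup R

instance (R : Type*) [CommRing R] : Group (PGL2 R) :=
  QuotientGroup.Quotient.group _

/-- The canonical projection `GL₂(R) → PGL₂(R)`. -/
def Proj (R : Type*) [CommRing R] : GL (Fin 2) R →* PGL2 R :=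
  QuotientGroup.mk' (scalarSubgroup R)

/-- The homomorphism `PGL₂(R) → PGL₂(S)` induced by a ring homomorphism `R → S`. -/
def PGLmap {R S : Type*} [CommRing R] [CommRing S] (f : R →+* S) :
    PGL2 R →* PGL2 S := by
  refine QuotientGroup.lift (scalarSubgroup R)
    ((Proj S).comp (Matrix.GeneralLinearGroup.map f)) ?_
  rintro _ ⟨u, rfl⟩
  rw [MonoidHom.mem_ker, MonoidHom.comp_apply]
  have : (Matrix.GeneralLinearGroup.map f) (scalarHom R u) = scalarHom S (Units.map f.toMonoidHom u) := by
    refine Units.ext ?_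
    ext i j
    simp [scalarHom, Matrix.GeneralLinearGroup.map, Matrix.scalar_apply, Matrix.diagonal_apply]
    split <;> simp
  rw [this]
  exact (QuotientGroup.eq_one_iff _).mpr ⟨_, rfl⟩

/-- Discrete topology on finite matrix groups. -/
instance (R : Type*) [CommRing R] : TopologicalSpace (PGL2 R) := ⊥
instance instTopGL (R : Type*) [CommRing R] : TopologicalSpace (GL (Fin 2) R) := ⊥

-- scratch: key lemma
lemma scalarHom_val (k : Type*) [CommRing k] (c : kˣ) :
    ((scalarHom k c : GL (Fin 2) k) : Matrix (Fin 2) (Fin 2) k) = (c : k) • 1 := by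
  show (Matrix.scalar (Fin 2)) (c : k) = _
  rw [Matrix.scalar_apply, ← Matrix.smul_one_eq_diagonal]

lemma proj_scalar_eq_one (k : Type*) [CommRing k] (c : kˣ) :
    Proj k (scalarHom k c) = 1 :=
  (QuotientGroup.eq_one_iff _).mpr ⟨c, rfl⟩

lemma key (k : Type*) [Field k] (hchar : ringChar k ≠ 2) (x : PGL2 k)
    (hx1 : x ≠ 1) (hx2 : x ^ 2 = 1) (g : GL (Fin 2) k) (hg : Proj k g = x) :
    ((g : Matrix (Fin 2) (Fin 2) k)) ^ 2
      = (-(Matrix.GeneralLinearGroup.det g : k)) • 1 := by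
  have htwo : (2 : k) ≠ 0 := Ring.two_ne_zero hchar
  have h2 : Proj k (g ^ 2) = 1 := by rw [map_pow, hg, hx2]
  have hmem : g ^ 2 ∈ scalarSubgroup k := (QuotientGroup.eq_one_iff _).mp h2
  rw [scalarSubgroup, MonoidHom.mem_range] at hmem
  obtain ⟨u, hu⟩ := hmem
  have hu' : ((g : Matrix (Fin 2) (Fin 2) k)) ^ 2 = (u : k) • 1 := by
    have h := congrArg Units.val hu
    rw [Units.val_pow_eq_pow_val] at h
    rw [← h, scalarHom_val]
  set d : k := (Matrix.GeneralLinearGroup.det g : k) with hd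
  have hdg : ((g : Matrix (Fin 2) (Fin 2) k)).det = d := by
    rw [hd, Matrix.GeneralLinearGroup.val_det_apply]
  have hdet : (u : k) ^ 2 = d ^ 2 := by
    have h := congrArg Matrix.det hu'
    rw [Matrix.det_pow, Matrix.det_smul, Matrix.det_one, hdg] at h
    simpa using h.symm
  have hcases : (u : k) = -d ∨ (u : k) = d := by
    have h0 : ((u : k) + d) * ((u : k) - d) = 0 := by ring_nf; linear_combination hdet
    rcases mul_eq_zero.mp h0 with h | h
    · exact Or.inl (eq_neg_of_add_eq_zero_left h)
    · exact Or.inr (sub_eq_zero.mp h)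
  rcases hcases with h | h
  · rw [hu', h]
  · -- contradiction case: g is scalar
    exfalso
    have hadj : (g : Matrix (Fin 2) (Fin 2) k)
        = Matrix.adjugate (g : Matrix (Fin 2) (Fin 2) k) := by
      have h1 : (g : Matrix (Fin 2) (Fin 2) k) * (g : Matrix (Fin 2) (Fin 2) k)
          = (g : Matrix (Fin 2) (Fin 2) k) * Matrix.adjugate (g : Matrix (Fin 2) (Fin 2) k) := by
        rw [Matrix.mul_adjugate, hdg, ← h, ← sq, hu']
      exact (Units.mul_right_inj g).mp h1
    set M : Matrix (Fin 2) (Fin 2) k := (g : Matrix (Fin 2) (Fin 2) k) with hM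
    have h01 : M 0 1 = 0 := by
      have := congrFun (congrFun hadj 0) 1
      rw [Matrix.adjugate_fin_two] at this
      simp at this
      have h2 : (2 : k) * M 0 1 = 0 := by linear_combination this
      exact (mul_eq_zero.mp h2).resolve_left htwo
    have h10 : M 1 0 = 0 := by
      have := congrFun (congrFun hadj 1) 0
      rw [Matrix.adjugate_fin_two] at this
      simp at this
      have h2 : (2 : k) * M 1 0 = 0 := by linear_combination this
      exact (mul_eq_zero.mp h2).resolve_left htwo
    have h00 : M 0 0 = M 1 1 := by
      have := congrFun (congrFun hadj 0) 0
      rw [Matrix.adjugate_fin_two] at this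
      simpa using this
    have hscalar : M = (M 0 0) • 1 := by
      ext i j
      fin_cases i <;> fin_cases j <;>
        simp [h01, h10, ← h00, Matrix.one_apply]
    have hunit : IsUnit (M 0 0) := by
      have : IsUnit (M 0 0 * M 0 0) := by
        have := (Matrix.GeneralLinearGroup.det g).isUnit
        rw [Matrix.GeneralLinearGroup.val_det_apply, ← hM, Matrix.det_fin_two, h01, h10, ← h00] at this
        simpa using this
      exact isUnit_of_mul_isUnit_left this
    have hmem' : g ∈ scalarSubgroup k := by
      refine ⟨hunit.unit, Units.ext ?_⟩
      rw [scalarHom_val, hunit.unit_spec, ← hscalar]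
    have : x = 1 := by
      rw [← hg]
      exact (QuotientGroup.eq_one_iff _).mpr hmem'
    exact hx1 this

lemma lift_iff (k : Type*) [Field k] (hchar : ringChar k ≠ 2) (x : PGL2 k)
    (hx1 : x ≠ 1) (hx2 : x ^ 2 = 1) (g : GL (Fin 2) k) (hg : Proj k g = x) :
    (∃ G : GL (Fin 2) k, G ^ 2 = 1 ∧ Proj k G = x) ↔
      IsSquare (-(Matrix.GeneralLinearGroup.det g)) := by
  constructor
  · rintro ⟨G, hG2, hGx⟩
    -- first: -(det G : k) = 1
    have hkeyG := key k hchar x hx1 hx2 G hGx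
    have hG2' : ((G : Matrix (Fin 2) (Fin 2) k)) ^ 2 = 1 := by
      have := congrArg Units.val hG2
      rwa [Units.val_pow_eq_pow_val] at this
    have hdG : -(Matrix.GeneralLinearGroup.det G : k) = 1 := by
      have h := hkeyG.symm.trans hG2'
      have := congrFun (congrFun h 0) 0
      simpa using this
    -- relate g and G
    have hrel : Proj k (g * G⁻¹) = 1 := by
      rw [_root_.map_mul, _root_.map_inv, hg, hGx, mul_inv_cancel]
    have hmem : g * G⁻¹ ∈ scalarSubgroup k := (QuotientGroup.eq_one_iff _).mp hrel
    rw [scalarSubgroup, MonoidHom.mem_range] at hmem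
    obtain ⟨c, hc⟩ := hmem
    have hgc : scalarHom k c * G = g := by rw [hc, inv_mul_cancel_right]
    refine ⟨c, Units.ext ?_⟩
    rw [Units.val_neg, Units.val_mul]
    have hdet : (Matrix.GeneralLinearGroup.det g : k)
        = (c : k) ^ 2 * (Matrix.GeneralLinearGroup.det G : k) := by
      rw [Matrix.GeneralLinearGroup.val_det_apply, Matrix.GeneralLinearGroup.val_det_apply,
        ← hgc, Units.val_mul, scalarHom_val, Matrix.smul_mul, Matrix.one_mul,
        Matrix.det_smul]
      simp
    rw [hdet]
    have : -(((c:k)) ^ 2 * (Matrix.GeneralLinearGroup.det G : k))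
        = (c:k) ^ 2 * (-(Matrix.GeneralLinearGroup.det G : k)) := by ring
    rw [this, hdG, mul_one, sq]
  · rintro ⟨r, hr⟩
    have hval : -(Matrix.GeneralLinearGroup.det g : k) = (r : k) * (r : k) := by
      have := congrArg Units.val hr
      rwa [Units.val_neg, Units.val_mul] at this
    refine ⟨scalarHom k r⁻¹ * g, ?_, ?_⟩
    · refine Units.ext ?_
      rw [Units.val_pow_eq_pow_val, Units.val_mul, scalarHom_val,
        Matrix.smul_mul, Matrix.one_mul, smul_pow, key k hchar x hx1 hx2 g hg,
        smul_smul, Units.val_one]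
      have hone : ((r⁻¹ : kˣ) : k) * (r : k) = 1 := by
        rw [← Units.val_mul, inv_mul_cancel, Units.val_one]
      have : ((r⁻¹ : kˣ) : k) ^ 2 * (-(Matrix.GeneralLinearGroup.det g : k)) = 1 := by
        rw [hval]
        linear_combination (((r⁻¹ : kˣ) : k) * (r : k) + 1) * hone
      rw [this, one_smul]
    · rw [_root_.map_mul, proj_scalar_eq_one, one_mul, hg]

/-- Criterion for a projective involution in `PGL₂(k)` (`k` a finite field of odd
characteristic) to lift to an involution in `GL₂(k)`: a lift of order dividing 2 exists
iff for some (equivalently, every) lift `g` of `x`, `-det g` is a square. -/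
theorem involution_lifting_criterion (k : Type*) [Field k] [Finite k]
    (hchar : ringChar k ≠ 2) (x : PGL2 k) (hx1 : x ≠ 1) (hx2 : x ^ 2 = 1) :
    ((∃ G : GL (Fin 2) k, G ^ 2 = 1 ∧ Proj k G = x) ↔
      ∃ g : GL (Fin 2) k, Proj k g = x ∧ IsSquare (-(Matrix.GeneralLinearGroup.det g))) ∧
    ((∃ G : GL (Fin 2) k, G ^ 2 = 1 ∧ Proj k G = x) ↔
      ∀ g : GL (Fin 2) k, Proj k g = x → IsSquare (-(Matrix.GeneralLinearGroup.det g))) := by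
  obtain ⟨g, hg⟩ := QuotientGroup.mk'_surjective (scalarSubgroup k) x
  have hg' : Proj k g = x := hg
  constructor
  · constructor
    · intro h
      exact ⟨g, hg', (lift_iff k hchar x hx1 hx2 g hg').mp h⟩
    · rintro ⟨g', hgx', hsq⟩
      exact (lift_iff k hchar x hx1 hx2 g' hgx').mpr hsq
  · constructor
    · intro h g' hgx'
      exact (lift_iff k hchar x hx1 hx2 g' hgx').mp h
    · intro hall
      exact (lift_iff k hchar x hx1 hx2 g hg').mpr (hall g hg')
end

section
/- Let R = Z[√−2] (the ring of integers of Q(√−2)) and let π : R → F_3 be the ring homomorphism with π(√−2) = 1. Then the induced group homomorphism PGL_2(R) → PGL_2(F_3) admits a section: there exists a group homomorphism s : PGL_2(F_3) → PGL_2(R) whose composite with the induced homomorphism is the identity on PGL_2(F_3). -/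
open Matrix

set_option maxRecDepth 100000
set_option maxHeartbeats 4000000
namespace PGLSection

def tblN : List ℕ := [210938,210938,210938,210938,210938,210938,210938,210938,210938,210938,210938,210938,131416,258563,195957,131441,195913,258582,210938,210938,210938,259183,132042,194711,259208,194667,132061,210938,210938,210836,210938,270956,104018,210938,104042,271082,210938,207085,207186,274087,210938,104643,274208,104663,210938,210938,167913,167914,210337,207831,210938,210191,210938,207686,210938,179788,179686,210938,119542,286582,210938,286606,119668,210938,222710,222711,180433,182938,210938,180287,210938,182793,210938,183438,183539,116416,210938,285961,116537,285981,210938]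

/-- Index of a 2×2 matrix over `ZMod 3`. -/
def idx (m : Matrix (Fin 2) (Fin 2) (ZMod 3)) : ℕ :=
  (m 0 0).val + 3 * (m 0 1).val + 9 * (m 1 0).val + 27 * (m 1 1).val

def dec (n k : ℕ) : ℤ := (↑(n / 5 ^ k % 5) : ℤ) - 2

/-- Lift of a matrix over `ZMod 3` to `ℤ√-2`. -/
def tbl (m : Matrix (Fin 2) (Fin 2) (ZMod 3)) : Matrix (Fin 2) (Fin 2) (ℤ√(-2)) :=
  Matrix.of fun i j =>
    (⟨dec (tblN.getD (idx m) 0) (4 * i.val + 2 * j.val),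
      dec (tblN.getD (idx m) 0) (4 * i.val + 2 * j.val + 1)⟩ : ℤ√(-2))

/-- Reduction mod 3 as a bare function. -/
def πf (x : ℤ√(-2)) : ZMod 3 := (x.re : ZMod 3) + (x.im : ZMod 3)

lemma tbl_one : tbl 1 = 1 := by decide

lemma tbl_neg_one : tbl (-1) = -1 := by decide

lemma tbl_red : ∀ m : Matrix (Fin 2) (Fin 2) (ZMod 3),
    m 0 0 * m 1 1 - m 0 1 * m 1 0 ≠ 0 → (tbl m).map πf = m := by decide

lemma tbl_mul : ∀ m n : Matrix (Fin 2) (Fin 2) (ZMod 3),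
    m 0 0 * m 1 1 - m 0 1 * m 1 0 ≠ 0 → n 0 0 * n 1 1 - n 0 1 * n 1 0 ≠ 0 →
    tbl (m * n) = tbl m * tbl n := by decide

end PGLSection

namespace PGLSection

lemma nz (g : GL (Fin 2) (ZMod 3)) :
    (↑g : Matrix (Fin 2) (Fin 2) (ZMod 3)) 0 0 * (↑g : Matrix (Fin 2) (Fin 2) (ZMod 3)) 1 1
      - (↑g : Matrix (Fin 2) (Fin 2) (ZMod 3)) 0 1 * (↑g : Matrix (Fin 2) (Fin 2) (ZMod 3)) 1 0 ≠ 0 := by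
  have h := (Matrix.isUnit_iff_isUnit_det (↑g : Matrix (Fin 2) (Fin 2) (ZMod 3))).mp g.isUnit
  rw [Matrix.det_fin_two] at h
  exact h.ne_zero

lemma tbl_mul_inv (g : GL (Fin 2) (ZMod 3)) :
    tbl ↑g * tbl ↑g⁻¹ = 1 := by
  rw [← tbl_mul _ _ (nz g) (nz g⁻¹), ← Units.val_mul, mul_inv_cancel, Units.val_one, tbl_one]

def F : GL (Fin 2) (ZMod 3) →* GL (Fin 2) (ℤ√(-2)) where
  toFun g := ⟨tbl ↑g, tbl ↑g⁻¹, tbl_mul_inv g, by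
    have := tbl_mul_inv g⁻¹; rwa [inv_inv] at this⟩
  map_one' := by
    refine Units.ext ?_
    show tbl ↑(1 : GL (Fin 2) (ZMod 3)) = 1
    rw [Units.val_one, tbl_one]
  map_mul' g h := by
    refine Units.ext ?_
    show tbl ↑(g * h) = tbl ↑g * tbl ↑h
    rw [Units.val_mul, tbl_mul _ _ (nz g) (nz h)]

lemma unit3 : ∀ u : (ZMod 3)ˣ, u = 1 ∨ u = -1 := by decide

def s : PGL2 (ZMod 3) →* PGL2 (ℤ√(-2)) := by
  refine QuotientGroup.lift (scalarSubgroup (ZMod 3)) ((Proj (ℤ√(-2))).comp F) ?_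
  rintro _ ⟨u, rfl⟩
  rw [MonoidHom.mem_ker, MonoidHom.comp_apply]
  refine (QuotientGroup.eq_one_iff _).mpr ?_
  rcases unit3 u with h | h <;> subst h
  · exact ⟨1, by
      refine Units.ext ?_
      show (Matrix.scalar (Fin 2)) ((1 : (ℤ√(-2))ˣ) : ℤ√(-2)) = tbl ↑(scalarHom (ZMod 3) 1)
      simp [scalarHom, tbl_one]⟩
  · exact ⟨-1, by
      refine Units.ext ?_
      show (Matrix.scalar (Fin 2)) ((-1 : (ℤ√(-2))ˣ) : ℤ√(-2)) = tbl ↑(scalarHom (ZMod 3) (-1))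
      have h1 : ((-1 : (ℤ√(-2))ˣ) : ℤ√(-2)) = -1 := rfl
      have h2 : (↑(scalarHom (ZMod 3) (-1)) : Matrix (Fin 2) (Fin 2) (ZMod 3))
          = (Matrix.scalar (Fin 2)) ((-1 : (ZMod 3)ˣ) : ZMod 3) := rfl
      rw [h1, h2, Units.val_neg, Units.val_one, map_neg, map_neg, _root_.map_one, _root_.map_one, tbl_neg_one]⟩

end PGLSection

open PGLSection in
/-- Let `R = ℤ[√-2]` and let `π : R → 𝔽₃` be the ring homomorphism with `π(√-2) = 1`.
Then the induced homomorphism `PGL₂(R) → PGL₂(𝔽₃)` admits a section. -/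
theorem pgl2_zsqrtd_section (π : ℤ√(-2) →+* ZMod 3) (hπ : π Zsqrtd.sqrtd = 1) :
    ∃ s : PGL2 (ZMod 3) →* PGL2 (ℤ√(-2)),
      (PGLmap π).comp s = MonoidHom.id (PGL2 (ZMod 3)) := by
  have hπx : ∀ x : ℤ√(-2), π x = πf x := by
    intro x
    have hx : x = (⟨x.re, x.im⟩ : ℤ√(-2)) := rfl
    rw [hx, Zsqrtd.decompose, map_add, RingHom.map_mul, hπ, map_intCast, map_intCast, one_mul]
    simp [πf, Zsqrtd.decompose]
  refine ⟨s, ?_⟩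
  ext q
  induction q using QuotientGroup.induction_on with
  | H g =>
    show (PGLmap π) (s (QuotientGroup.mk g)) = QuotientGroup.mk g
    have hs : s (QuotientGroup.mk g) = Proj (ℤ√(-2)) (F g) :=
      rfl
    rw [hs]
    have hmap : Matrix.GeneralLinearGroup.map π (F g) = g := by
      refine Units.ext ?_
      show (tbl ↑g).map π = ↑g
      have heq : (tbl ↑g).map π = (tbl ↑g).map πf := by
        ext i j; exact hπx _
      rw [heq, tbl_red _ (nz g)]
    show PGLmap π (Proj (ℤ√(-2)) (F g)) = _
    have hl : PGLmap π (Proj (ℤ√(-2)) (F g))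
        = Proj (ZMod 3) (Matrix.GeneralLinearGroup.map π (F g)) :=
      rfl
    rw [hl, hmap]
    rfl
end

section
/- Let k be a finite field of odd characteristic, and let H' be the subgroup of k× consisting of all elements of odd order (the prime-to-2 part of k×). Then the central subgroup Z' = {λ·I : λ ∈ H'} of GL_2(k) is a direct factor of GL_2(k): there exists a group homomorphism r : GL_2(k) → Z' with r(z) = z for every z ∈ Z', so that GL_2(k) is isomorphic to (ker r) × Z'. -/
open Matrix

/-- A central retraction onto a subgroup splits the group as a direct product. -/
theorem central_retraction_ker_prod {G : Type*} [Group G] {Z : Subgroup G}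
    (hZ : Z ≤ Subgroup.center G) (r : G →* Z) (hret : ∀ z : Z, r (z : G) = z) :
    Nonempty (G ≃* (r.ker × Z)) := by
  have hcomm : ∀ (z : Z) (x : G), (z : G) * x = x * z := fun z x =>
    ((Subgroup.mem_center_iff.mp (hZ z.2)) x).symm
  have hker : ∀ g : G, g * (↑(r g))⁻¹ ∈ r.ker := by
    intro g
    rw [MonoidHom.mem_ker, _root_.map_mul, map_inv, hret (r g), mul_inv_cancel]
  refine ⟨{
      toFun := fun g => (⟨g * (↑(r g))⁻¹, hker g⟩, r g),
      invFun := fun p => (p.1 : G) * (p.2 : G),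
      left_inv := fun g => by simp,
      right_inv := ?_,
      map_mul' := ?_ }⟩
  · rintro ⟨nn, z⟩
    have h1 : r ((nn : G) * (z : G)) = z := by
      rw [_root_.map_mul, MonoidHom.mem_ker.mp nn.2, one_mul, hret]
    refine Prod.ext (Subtype.ext ?_) h1
    show (nn : G) * z * (↑(r ((nn : G) * z)))⁻¹ = nn
    rw [h1, mul_inv_cancel_right]
  · intro g h
    refine Prod.ext (Subtype.ext ?_) (_root_.map_mul r g h)
    show g * h * (↑(r (g * h)))⁻¹ = (g * (↑(r g))⁻¹) * (h * (↑(r h))⁻¹)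
    rw [_root_.map_mul, Subgroup.coe_mul, _root_.mul_inv_rev]
    have ca : Commute ((↑(r g) : G))⁻¹ (h * (↑(r h))⁻¹) :=
      (show Commute (↑(r g) : G) (h * (↑(r h))⁻¹) from hcomm (r g) _).inv_left
    rw [mul_assoc g ((↑(r g) : G))⁻¹ (h * (↑(r h))⁻¹), ca.eq]
    group

/-- For a finite field `k` of odd characteristic, let `H'` be the subgroup of `kˣ` of
elements of odd order. Then the central subgroup `Z' = {λ·I : λ ∈ H'}` of `GL₂(k)` is a
direct factor: there is a retraction `r : GL₂(k) → Z'` restricting to the identity on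
`Z'`, and `GL₂(k) ≅ (ker r) × Z'`. -/
theorem odd_part_scalars_direct_factor (k : Type*) [Field k] [Finite k]
    (hchar : ringChar k ≠ 2)
    (H' : Subgroup kˣ) (hH' : ∀ x : kˣ, x ∈ H' ↔ Odd (orderOf x)) :
    ∃ r : GL (Fin 2) k →* (H'.map (scalarHom k)),
      (∀ z : H'.map (scalarHom k), r (z : GL (Fin 2) k) = z) ∧
      Nonempty (GL (Fin 2) k ≃* (r.ker × (H'.map (scalarHom k)))) := by
  classical
  set n := Nat.card kˣ with hn
  have hn0 : n ≠ 0 := Nat.card_pos.ne'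
  set v := n.factorization 2 with hv
  set m := n / 2 ^ v with hm
  have hnm : 2 ^ v * m = n := Nat.ordProj_mul_ordCompl_eq_self n 2
  have hm0 : m ≠ 0 := by
    intro h; rw [h, mul_zero] at hnm; exact hn0 hnm.symm
  have hmdvd : ¬ (2 ∣ m) := Nat.not_dvd_ordCompl Nat.prime_two hn0
  have hcop : Nat.Coprime (2 ^ (v + 1)) m :=
    Nat.Coprime.pow_left _ ((Nat.prime_two.coprime_iff_not_dvd).mpr hmdvd)
  obtain ⟨t, ht⟩ : ∃ t, 2 ^ (v + 1) * t ≡ 1 [MOD m] := by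
    rcases eq_or_lt_of_le (Nat.one_le_iff_ne_zero.mpr hm0) with h1 | h1
    · exact ⟨0, h1 ▸ Nat.modEq_one⟩
    · obtain ⟨t, -, ht⟩ := Nat.exists_mul_mod_eq_one_of_coprime hcop h1
      exact ⟨t, by rwa [Nat.ModEq, Nat.mod_eq_of_lt h1]⟩
  set e := 2 ^ v * t with he
  have keyA : ∀ x : kˣ, Odd (orderOf (x ^ e)) := by
    intro x
    have hpow : (x ^ e) ^ m = 1 := by
      rw [← pow_mul]
      have hem : e * m = n * t := by rw [he, ← hnm]; ring
      rw [hem, pow_mul, pow_card_eq_one', one_pow]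
    have hdvd : orderOf (x ^ e) ∣ m := orderOf_dvd_of_pow_eq_one hpow
    have h2 : ¬ (2 ∣ orderOf (x ^ e)) := fun h2 => hmdvd (h2.trans hdvd)
    exact Nat.odd_iff.mpr (Nat.two_dvd_ne_zero.mp h2)
  have keyB : ∀ x : kˣ, Odd (orderOf x) → (x ^ 2) ^ e = x := by
    intro x hx
    have hxn : orderOf x ∣ n := orderOf_dvd_natCard x
    have h2x : ¬ (2 ∣ orderOf x) := by
      rw [Nat.odd_iff] at hx; omega
    have hcopx : Nat.Coprime (orderOf x) (2 ^ v) :=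
      Nat.Coprime.pow_right _
        (Nat.coprime_comm.mp ((Nat.prime_two.coprime_iff_not_dvd).mpr h2x))
    have hdm : orderOf x ∣ m := by
      refine hcopx.dvd_of_dvd_mul_left ?_
      rw [hnm]; exact hxn
    have hmod : 2 * e ≡ 1 [MOD orderOf x] := by
      have h2e : 2 * e = 2 ^ (v + 1) * t := by rw [he]; ring
      rw [h2e]
      exact (ht).of_dvd hdm
    calc (x ^ 2) ^ e = x ^ (2 * e) := by rw [← pow_mul]
      _ = x ^ 1 := pow_eq_pow_iff_modEq.mpr hmod
      _ = x := pow_one x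
  have hdet : ∀ u : kˣ, Matrix.GeneralLinearGroup.det (scalarHom k u) = u ^ 2 := by
    intro u
    refine Units.ext ?_
    show ((scalarHom k u : GL (Fin 2) k) : Matrix (Fin 2) (Fin 2) k).det = ((u ^ 2 : kˣ) : k)
    simp [scalarHom, Matrix.det_fin_two, Matrix.scalar_apply, sq]
  set Z' := H'.map (scalarHom k) with hZ'
  have hmem : ∀ g : GL (Fin 2) k,
      scalarHom k ((Matrix.GeneralLinearGroup.det g) ^ e) ∈ Z' :=
    fun g => ⟨_, (hH' _).mpr (keyA _), rfl⟩
  set r : GL (Fin 2) k →* Z' :=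
    MonoidHom.codRestrict
      (((scalarHom k).comp (powMonoidHom e)).comp Matrix.GeneralLinearGroup.det) Z' hmem
    with hr
  have hret : ∀ z : Z', r (z : GL (Fin 2) k) = z := by
    rintro ⟨_, u, hu, rfl⟩
    apply Subtype.ext
    show scalarHom k ((Matrix.GeneralLinearGroup.det (scalarHom k u)) ^ e) = scalarHom k u
    rw [hdet, keyB u ((hH' u).mp hu)]
  have hcomm : ∀ (z : Z') (x : GL (Fin 2) k),
      (z : GL (Fin 2) k) * x = x * z := by
    intro z x
    have hz : (z : GL (Fin 2) k) ∈ scalarSubgroup k := by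
      rcases z.2 with ⟨u, _, hcoe⟩; exact ⟨u, hcoe⟩
    exact ((Subgroup.mem_center_iff.mp (scalarSubgroup_le_center k hz)) x).symm
  have hle : Z' ≤ Subgroup.center (GL (Fin 2) k) := by
    intro x hx
    rcases hx with ⟨u, _, hcoe⟩
    exact scalarSubgroup_le_center k ⟨u, hcoe⟩
  exact ⟨r, hret, central_retraction_ker_prod hle r hret⟩
end
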